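/- arXiv:1111.3857 — 3 statements merged into one kernel-verified Lean document; each statement's English description precedes it below -/
import Mathlib

section
/- For every w ∈ ℝ² \ {0} with ‖w‖ ≠ 1, Λ₂(w) = (‖w‖²/(1+‖w‖²)) ∫₀¹ u^{−1/2} (1−u)^{−1/2} (1−βu)^{−1/2} du, where β = 4‖w‖²/(1+‖w‖²)² and Λ₂(w) = ‖w‖² (2‖w‖)^{−1} ∫_{P(w)} ‖w−y‖^{−1} ‖y‖^{−1} dμ¹(y) with P(w) = {y ∈ ℝ² : 2⟪w,y⟫ = 1+‖w‖²}. -/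
open MeasureTheory Real

set_option maxHeartbeats 1000000

/-- Substitution `t = c √((1-u)/u)` for the elliptic-type integral. -/
lemma elliptic_subst (c a : ℝ) (hc : 1 < c) (hca : c ^ 2 - a ^ 2 = 1) :
    ∫ t in Set.Ioi (0:ℝ), (Real.sqrt (a^2 + t^2))⁻¹ * (Real.sqrt (c^2 + t^2))⁻¹ =
    ∫ u in Set.Ioo (0:ℝ) 1,
      (1/2) * ((Real.sqrt u)⁻¹ * (Real.sqrt (1-u))⁻¹ * (Real.sqrt (c^2 - u))⁻¹) := by
  have hc0 : (0:ℝ) < c := lt_trans one_pos hc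
  set φ : ℝ → ℝ := fun u => c * Real.sqrt ((1-u)/u) with hφ
  set D : ℝ → ℝ := fun u => c * ((-(u^2)⁻¹) / (2 * Real.sqrt ((1-u)/u))) with hD
  have himg : φ '' Set.Ioo 0 1 = Set.Ioi (0:ℝ) := by
    ext y
    constructor
    · rintro ⟨u, ⟨hu0, hu1⟩, rfl⟩
      exact mul_pos hc0 (Real.sqrt_pos.mpr (div_pos (by linarith) hu0))
    · intro hy
      have hy0 : (0:ℝ) < y := hy
      refine ⟨c^2/(c^2+y^2), ⟨?_, ?_⟩, ?_⟩
      · positivity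
      · rw [div_lt_one (by positivity)]; nlinarith
      · have hu0 : (0:ℝ) < c^2/(c^2+y^2) := by positivity
        have h1 : (1 - c^2/(c^2+y^2))/(c^2/(c^2+y^2)) = (y/c)^2 := by
          field_simp
          ring
        show c * Real.sqrt _ = y
        rw [h1, Real.sqrt_sq (by positivity)]
        field_simp
  have hderiv : ∀ u ∈ Set.Ioo (0:ℝ) 1, HasDerivWithinAt φ (D u) (Set.Ioo 0 1) u := by
    intro u ⟨hu0, hu1⟩
    have hgne : (1-u)/u ≠ 0 := ne_of_gt (div_pos (by linarith) hu0)
    have hinner : HasDerivAt (fun x : ℝ => (1-x)/x) (-(u^2)⁻¹) u := by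
      have h1 : HasDerivAt (fun x : ℝ => x⁻¹ - 1) (-(u^2)⁻¹) u :=
        (hasDerivAt_inv (ne_of_gt hu0)).sub_const 1
      refine h1.congr_of_eventuallyEq ?_
      filter_upwards [Ioi_mem_nhds hu0] with x hx
      have : x ≠ 0 := ne_of_gt hx
      field_simp
    have h2 : HasDerivAt (fun x : ℝ => Real.sqrt ((1-x)/x))
        ((-(u^2)⁻¹) / (2 * Real.sqrt ((1-u)/u))) u := hinner.sqrt hgne
    exact ((h2.const_mul c).hasDerivWithinAt)
  have hinj : Set.InjOn φ (Set.Ioo 0 1) := by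
    intro u ⟨hu0, hu1⟩ u' ⟨hu0', hu1'⟩ h
    have h1 : Real.sqrt ((1-u)/u) = Real.sqrt ((1-u')/u') := by
      have := mul_left_cancel₀ (ne_of_gt hc0) h
      exact this
    have h2 : (1-u)/u = (1-u')/u' := by
      rw [Real.sqrt_inj (le_of_lt (div_pos (by linarith) hu0))
        (le_of_lt (div_pos (by linarith) hu0'))] at h1
      exact h1
    field_simp at h2
    nlinarith
  rw [← himg,
    integral_image_eq_integral_abs_deriv_smul measurableSet_Ioo hderiv hinj]
  refine setIntegral_congr_fun measurableSet_Ioo ?_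
  intro u ⟨hu0, hu1⟩
  have h1u : (0:ℝ) < 1 - u := by linarith
  have hcu : (0:ℝ) < c^2 - u := by nlinarith
  have hsu : (0:ℝ) < Real.sqrt u := Real.sqrt_pos.mpr hu0
  have hs1u : (0:ℝ) < Real.sqrt (1-u) := Real.sqrt_pos.mpr h1u
  have hscu : (0:ℝ) < Real.sqrt (c^2-u) := Real.sqrt_pos.mpr hcu
  have hg : Real.sqrt ((1-u)/u) = Real.sqrt (1-u) / Real.sqrt u :=
    Real.sqrt_div h1u.le u
  have hmu : Real.sqrt u * Real.sqrt u = u := Real.mul_self_sqrt hu0.le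
  -- compute φ u squared
  have hφ2 : (φ u)^2 = c^2 * ((1-u)/u) := by
    rw [hφ]; simp only
    rw [mul_pow, Real.sq_sqrt (le_of_lt (div_pos h1u hu0))]
  have ha2 : a^2 + (φ u)^2 = (c^2-u)/u := by
    rw [hφ2]; field_simp; linear_combination (-u) * hca
  have hc2 : c^2 + (φ u)^2 = c^2/u := by
    rw [hφ2]; field_simp; ring
  have hHa : Real.sqrt (a^2 + (φ u)^2) = Real.sqrt (c^2-u) / Real.sqrt u := by
    rw [ha2, Real.sqrt_div hcu.le]
  have hHc : Real.sqrt (c^2 + (φ u)^2) = c / Real.sqrt u := by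
    rw [hc2, Real.sqrt_div (by positivity), Real.sqrt_sq hc0.le]
  have hDabs : |D u| = c * Real.sqrt u / (2 * Real.sqrt (1-u) * u^2) := by
    rw [hD]; simp only
    rw [hg, abs_mul, abs_of_pos hc0, abs_div, abs_neg, abs_inv,
      abs_of_pos (by positivity : (0:ℝ) < u^2),
      abs_of_pos (by positivity : (0:ℝ) < 2*(Real.sqrt (1-u)/Real.sqrt u))]
    field_simp
  show |D u| * ((Real.sqrt (a^2 + (φ u)^2))⁻¹ * (Real.sqrt (c^2 + (φ u)^2))⁻¹)
      = 1/2 * ((Real.sqrt u)⁻¹ * (Real.sqrt (1-u))⁻¹ * (Real.sqrt (c^2-u))⁻¹)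
  rw [hHa, hHc, hDabs]
  rw [show (u:ℝ)^2 = Real.sqrt u * Real.sqrt u * (Real.sqrt u * Real.sqrt u) by
    rw [hmu]; ring]
  field_simp


/-- In dimension two, away from the unit sphere, `Λ₂(w)` is computed by an
elliptic-type integral: `Λ₂(w) = (‖w‖²/(1+‖w‖²)) ∫₀¹ u^{-1/2}(1-u)^{-1/2}(1-βu)^{-1/2} du`
with `β = 4‖w‖²/(1+‖w‖²)²`. -/
theorem Lambda_two_elliptic_integral (w : EuclideanSpace ℝ (Fin 2))
    (hw : w ≠ 0) (hw1 : ‖w‖ ≠ 1) :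
    ‖w‖ ^ 2 * (2 * ‖w‖)⁻¹ *
        ∫ y in {y : EuclideanSpace ℝ (Fin 2) |
            2 * (inner ℝ w y : ℝ) = 1 + ‖w‖ ^ 2},
          ‖w - y‖⁻¹ * ‖y‖⁻¹ ∂μH[(1 : ℝ)] =
      (‖w‖ ^ 2 / (1 + ‖w‖ ^ 2)) *
        ∫ u in Set.Ioo (0 : ℝ) 1,
          u ^ (-(1 / 2) : ℝ) * (1 - u) ^ (-(1 / 2) : ℝ) *
            (1 - (4 * ‖w‖ ^ 2 / (1 + ‖w‖ ^ 2) ^ 2) * u) ^ (-(1 / 2) : ℝ) := by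
  have hr0 : (0:ℝ) < ‖w‖ := norm_pos_iff.mpr hw
  set r : ℝ := ‖w‖ with hrdef
  set c : ℝ := (1 + r^2)/(2*r) with hcdef
  set a : ℝ := (r^2 - 1)/(2*r) with hadef
  have hr0' : r ≠ 0 := ne_of_gt hr0
  have hca : c^2 - a^2 = 1 := by rw [hcdef, hadef]; field_simp; ring
  have ha0 : a ≠ 0 := by
    rw [hadef]
    intro h
    have h2 : r^2 = 1 := by field_simp at h; linarith
    exact hw1 (by nlinarith)
  have ha2 : 0 < a^2 := by rcases lt_or_gt_of_ne ha0 with h|h <;> nlinarith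
  have hc0 : 0 < c := by rw [hcdef]; positivity
  have hc1 : 1 < c := by nlinarith
  have hw2 : w 0 ^ 2 + w 1 ^ 2 = r ^ 2 := by
    have h : r = Real.sqrt (w 0 ^2 + w 1 ^2) := by
      rw [hrdef, EuclideanSpace.norm_eq, Fin.sum_univ_two]; simp [sq_abs]
    rw [h, Real.sq_sqrt (by positivity)]
  set d0 : ℝ := w 0 / r with hd0def
  set d1 : ℝ := w 1 / r with hd1def
  have hd : d0^2 + d1^2 = 1 := by
    rw [hd0def, hd1def]; field_simp; linear_combination hw2
  set f : ℝ → EuclideanSpace ℝ (Fin 2) :=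
    fun t => (WithLp.equiv 2 (Fin 2 → ℝ)).symm ![c*d0 - t*d1, c*d1 + t*d0] with hfdef
  have hf0 : ∀ t, f t 0 = c*d0 - t*d1 := fun t => rfl
  have hf1 : ∀ t, f t 1 = c*d1 + t*d0 := fun t => rfl
  have hiso : Isometry f := by
    apply Isometry.of_dist_eq
    intro s t
    rw [EuclideanSpace.dist_eq, Fin.sum_univ_two, Real.dist_eq (f s 0),
      Real.dist_eq (f s 1), Real.dist_eq s, sq_abs, sq_abs]
    have h : (f s 0 - f t 0)^2 + (f s 1 - f t 1)^2 = (s - t)^2 := by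
      rw [hf0, hf0, hf1, hf1]
      linear_combination (s-t)^2 * hd
    rw [h, Real.sqrt_sq_eq_abs]
  have hinner : ∀ y : EuclideanSpace ℝ (Fin 2), (inner ℝ w y : ℝ) = w 0 * y 0 + w 1 * y 1 := by
    intro y; simp [PiLp.inner_apply, RCLike.inner_apply, Fin.sum_univ_two]
    ring
  have hrange : Set.range f
      = {y : EuclideanSpace ℝ (Fin 2) | 2 * (inner ℝ w y : ℝ) = 1 + r ^ 2} := by
    ext y
    simp only [Set.mem_range, Set.mem_setOf_eq]
    constructor
    · rintro ⟨t, rfl⟩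
      rw [hinner, hf0, hf1, hd0def, hd1def, hcdef]
      field_simp
      linear_combination (1 + r^2) * hw2
    · intro hy
      rw [hinner] at hy
      refine ⟨y 1 * d0 - y 0 * d1, ?_⟩
      ext i
      fin_cases i
      · show f (y 1 * d0 - y 0 * d1) 0 = y 0
        rw [hf0, hd0def, hd1def, hcdef]
        field_simp
        linear_combination (-(w 0)) * hy + (2*(y 0)) * hw2
      · show f (y 1 * d0 - y 0 * d1) 1 = y 1
        rw [hf1, hd0def, hd1def, hcdef]
        field_simp
        linear_combination (-(w 1)) * hy + (2*(y 1)) * hw2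
  have hmap : Measure.map f volume
      = (μH[(1:ℝ)] : Measure (EuclideanSpace ℝ (Fin 2))).restrict
          {y : EuclideanSpace ℝ (Fin 2) | 2 * (inner ℝ w y : ℝ) = 1 + r ^ 2} := by
    rw [← MeasureTheory.hausdorffMeasure_real,
      hiso.map_hausdorffMeasure (Or.inl zero_le_one), hrange]
  have hft : ∀ t : ℝ, ‖f t‖ = Real.sqrt (c^2 + t^2) := by
    intro t
    rw [EuclideanSpace.norm_eq, Fin.sum_univ_two]
    simp only [Real.norm_eq_abs, sq_abs]
    congr 1
    rw [hf0, hf1]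
    linear_combination (c^2 + t^2) * hd
  have hwft : ∀ t : ℝ, ‖w - f t‖ = Real.sqrt (a^2 + t^2) := by
    intro t
    rw [EuclideanSpace.norm_eq, Fin.sum_univ_two]
    simp only [Real.norm_eq_abs, sq_abs]
    congr 1
    have hs0 : (w - f t) 0 = w 0 - f t 0 := rfl
    have hs1 : (w - f t) 1 = w 1 - f t 1 := rfl
    rw [hs0, hs1, hf0, hf1, hd0def, hd1def, hcdef, hadef]
    field_simp
    linear_combination (1 - 2*r^2 + 4*r^2*t^2 + r^4) * hw2
  have hint : (∫ y in {y : EuclideanSpace ℝ (Fin 2) | 2 * (inner ℝ w y : ℝ) = 1 + r ^ 2},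
        ‖w - y‖⁻¹ * ‖y‖⁻¹ ∂μH[(1:ℝ)])
      = ∫ t : ℝ, (Real.sqrt (a^2 + t^2))⁻¹ * (Real.sqrt (c^2 + t^2))⁻¹ := by
    rw [← hmap, (hiso.isClosedEmbedding.measurableEmbedding).integral_map]
    congr 1
    funext t
    rw [hwft, hft]
  have heven : (∫ t : ℝ, (Real.sqrt (a^2+t^2))⁻¹ * (Real.sqrt (c^2+t^2))⁻¹)
      = 2 * ∫ t in Set.Ioi (0:ℝ), (Real.sqrt (a^2+t^2))⁻¹ * (Real.sqrt (c^2+t^2))⁻¹ := by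
    rw [← integral_comp_abs
      (f := fun t => (Real.sqrt (a^2+t^2))⁻¹ * (Real.sqrt (c^2+t^2))⁻¹)]
    congr 1
    funext t
    rw [sq_abs]
  have hRHS : (∫ u in Set.Ioo (0:ℝ) 1, u ^ (-(1/2):ℝ) * (1-u) ^ (-(1/2):ℝ)
        * (1 - (4*r^2/(1+r^2)^2) * u) ^ (-(1/2):ℝ))
      = ∫ u in Set.Ioo (0:ℝ) 1,
          c * ((Real.sqrt u)⁻¹ * (Real.sqrt (1-u))⁻¹ * (Real.sqrt (c^2-u))⁻¹) := by
    refine setIntegral_congr_fun measurableSet_Ioo ?_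
    intro u hu
    obtain ⟨hu0, hu1⟩ := hu
    beta_reduce
    have hcu : (0:ℝ) < c^2 - u := by nlinarith
    have h4 : 4 * r^2/(1+r^2)^2 = (c^2)⁻¹ := by rw [hcdef]; field_simp; ring
    have h3 : 1 - (4 * r^2/(1+r^2)^2) * u = (c^2-u)/c^2 := by rw [h4]; field_simp
    rw [h3, Real.rpow_neg hu0.le, Real.rpow_neg (by linarith : (0:ℝ) ≤ 1 - u),
      Real.rpow_neg (by positivity : (0:ℝ) ≤ (c^2-u)/c^2),
      ← Real.sqrt_eq_rpow, ← Real.sqrt_eq_rpow, ← Real.sqrt_eq_rpow,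
      Real.sqrt_div hcu.le, Real.sqrt_sq hc0.le]
    have hsu : (0:ℝ) < Real.sqrt u := Real.sqrt_pos.mpr hu0
    have hs1u : (0:ℝ) < Real.sqrt (1-u) := Real.sqrt_pos.mpr (by linarith)
    have hscu : (0:ℝ) < Real.sqrt (c^2-u) := Real.sqrt_pos.mpr hcu
    field_simp
  rw [hint, heven, elliptic_subst c a hc1 hca, hRHS,
    MeasureTheory.integral_const_mul, MeasureTheory.integral_const_mul]
  rw [hcdef]
  field_simp
end

section
/- For every w ∈ ℝ² with ‖w‖ = 1, the integral ∫_{P(w)} ‖w−y‖^{−1} ‖y‖^{−1} dμ¹(y) diverges (equals +∞), where P(w) = {y ∈ ℝ² : 2⟪w,y⟫ = 1+‖w‖²}. Consequently Λ₂(w) = ‖w‖²(2‖w‖)^{−1} ∫_{P(w)} ‖w−y‖^{−1}‖y‖^{−1} dμ¹(y) is not uniformly bounded on ℝ² \ {0}. -/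
open MeasureTheory Real ENNReal Set

/-- `Λ₂(w)` as an `ℝ≥0∞`-valued integral (the rigorous resolution of the
distributional integral, with the delta resolved as a line integral). -/
noncomputable def LambdaTwo (w : EuclideanSpace ℝ (Fin 2)) : ℝ≥0∞ :=
  ENNReal.ofReal (‖w‖ ^ 2 * (2 * ‖w‖)⁻¹) *
    ∫⁻ y in {y : EuclideanSpace ℝ (Fin 2) |
        2 * (inner ℝ w y : ℝ) = 1 + ‖w‖ ^ 2},
      ENNReal.ofReal (‖w - y‖⁻¹ * ‖y‖⁻¹) ∂μH[(1 : ℝ)]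

lemma lintegral_inv_Ioo_top : ∫⁻ t in Set.Ioo (0:ℝ) 1, ENNReal.ofReal t⁻¹ = ⊤ := by
  by_contra h
  have hm : AEStronglyMeasurable (fun t : ℝ => t⁻¹) (volume.restrict (Ioo 0 1)) :=
    measurable_inv.aestronglyMeasurable
  have hpos : 0 ≤ᵐ[volume.restrict (Ioo (0:ℝ) 1)] fun t => t⁻¹ := by
    filter_upwards [ae_restrict_mem measurableSet_Ioo] with t ht
    exact inv_nonneg.2 ht.1.le
  have hInt : IntegrableOn (fun t : ℝ => t⁻¹) (Ioo 0 1) :=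
    (lintegral_ofReal_ne_top_iff_integrable hm hpos).1 h
  have h2 : IntegrableOn (fun x : ℝ => x ^ (-1 : ℝ)) (Ioo (0:ℝ) 1) := by
    refine hInt.congr_fun (fun x hx => ?_) measurableSet_Ioo
    rw [Real.rpow_neg_one]
  have := (intervalIntegral.integrableOn_Ioo_rpow_iff zero_lt_one).1 h2
  linarith

/-- For every `w ∈ ℝ²` with `‖w‖ = 1` the line integral
`∫_{P(w)} ‖w-y‖⁻¹ ‖y‖⁻¹ dμ¹(y)` diverges; consequently `Λ₂` is not uniformly
bounded on `ℝ² \ {0}`. -/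
theorem Lambda_two_unbounded :
    (∀ w : EuclideanSpace ℝ (Fin 2), ‖w‖ = 1 →
      (∫⁻ y in {y : EuclideanSpace ℝ (Fin 2) |
          2 * (inner ℝ w y : ℝ) = 1 + ‖w‖ ^ 2},
        ENNReal.ofReal (‖w - y‖⁻¹ * ‖y‖⁻¹) ∂μH[(1 : ℝ)]) = ⊤) ∧
    ¬ ∃ C : ℝ≥0∞, C ≠ ⊤ ∧
      ∀ w : EuclideanSpace ℝ (Fin 2), w ≠ 0 → LambdaTwo w ≤ C := by
  have main : ∀ w : EuclideanSpace ℝ (Fin 2), ‖w‖ = 1 →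
      (∫⁻ y in {y : EuclideanSpace ℝ (Fin 2) |
          2 * (inner ℝ w y : ℝ) = 1 + ‖w‖ ^ 2},
        ENNReal.ofReal (‖w - y‖⁻¹ * ‖y‖⁻¹) ∂μH[(1 : ℝ)]) = ⊤ := by
    intro w hw
    set v : EuclideanSpace ℝ (Fin 2) := !₂[-w 1, w 0] with hvdef
    have hv0 : v 0 = -w 1 := rfl
    have hv1 : v 1 = w 0 := rfl
    have hnw : w 0 * w 0 + w 1 * w 1 = 1 := by
      have h := real_inner_self_eq_norm_sq w
      rw [hw] at h
      have h2 : (1:ℝ) = w 0 * w 0 + w 1 * w 1 := by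
        have e : (inner ℝ w w : ℝ) = w 0 * w 0 + w 1 * w 1 := by
          simp only [PiLp.inner_apply, RCLike.inner_apply, conj_trivial, Fin.sum_univ_two]
        rw [← e, h]; norm_num
      linarith
    have hwv : (inner ℝ w v : ℝ) = 0 := by
      simp [PiLp.inner_apply, RCLike.inner_apply, Fin.sum_univ_two, hv0, hv1]
      ring
    have hnv : ‖v‖ = 1 := by
      have h := real_inner_self_eq_norm_sq v
      have h2 : (inner ℝ v v : ℝ) = 1 := by
        simp only [PiLp.inner_apply, RCLike.inner_apply, conj_trivial, Fin.sum_univ_two, hv0, hv1]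
        nlinarith [hnw]
      nlinarith [norm_nonneg v, h]
    set f : ℝ → EuclideanSpace ℝ (Fin 2) := fun t => w + t • v with hfdef
    have hf : Isometry f := by
      refine Isometry.of_dist_eq fun s t => ?_
      rw [dist_eq_norm, dist_eq_norm, hfdef]
      simp only [add_sub_add_left_eq_sub, ← sub_smul, norm_smul, hnv, Real.norm_eq_abs,
        mul_one]
    have hrange : {y : EuclideanSpace ℝ (Fin 2) |
        2 * (inner ℝ w y : ℝ) = 1 + ‖w‖ ^ 2} = Set.range f := by
      ext y
      simp only [Set.mem_setOf_eq, Set.mem_range, hw]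
      constructor
      · intro hy
        have hy' : w 0 * y 0 + w 1 * y 1 = 1 := by
          have h := hy
          simp [PiLp.inner_apply, RCLike.inner_apply, Fin.sum_univ_two] at h
          linarith
        refine ⟨-w 1 * (y 0 - w 0) + w 0 * (y 1 - w 1), PiLp.ext fun i => ?_⟩
        fin_cases i
        · show w 0 + (-w 1 * (y 0 - w 0) + w 0 * (y 1 - w 1)) * v 0 = y 0
          rw [hv0]; linear_combination y 0 * hnw - w 0 * hy'
        · show w 1 + (-w 1 * (y 0 - w 0) + w 0 * (y 1 - w 1)) * v 1 = y 1
          rw [hv1]; linear_combination y 1 * hnw - w 1 * hy'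
      · rintro ⟨t, rfl⟩
        rw [hfdef]
        simp only [inner_add_right, real_inner_smul_right, hwv, mul_zero, add_zero,
          real_inner_self_eq_norm_sq, hw]
        norm_num
    have hkey : (∫⁻ y in {y : EuclideanSpace ℝ (Fin 2) |
          2 * (inner ℝ w y : ℝ) = 1 + ‖w‖ ^ 2},
        ENNReal.ofReal (‖w - y‖⁻¹ * ‖y‖⁻¹) ∂μH[(1 : ℝ)])
        = ∫⁻ t, ENNReal.ofReal (‖w - f t‖⁻¹ * ‖f t‖⁻¹) ∂(volume : Measure ℝ) := by
      rw [hrange, ← hf.map_hausdorffMeasure (Or.inl zero_le_one),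
        (hf.isClosedEmbedding.measurableEmbedding).lintegral_map, hausdorffMeasure_real]
    rw [hkey]
    have hmeas : Measurable (fun t : ℝ => ENNReal.ofReal (‖w - f t‖⁻¹ * ‖f t‖⁻¹)) :=
      (((continuous_const.sub hf.continuous).norm.measurable.inv).mul
        (hf.continuous.norm.measurable.inv)).ennreal_ofReal
    have hbound : ∀ t ∈ Ioo (0:ℝ) 1,
        ENNReal.ofReal (t⁻¹ * (Real.sqrt 2)⁻¹)
          ≤ ENNReal.ofReal (‖w - f t‖⁻¹ * ‖f t‖⁻¹) := by
      intro t ht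
      have h1 : ‖w - f t‖ = t := by
        rw [hfdef]
        show ‖w - (w + t • v)‖ = t
        rw [sub_add_eq_sub_sub, sub_self, zero_sub, norm_neg, norm_smul, hnv,
          Real.norm_eq_abs, mul_one, abs_of_pos ht.1]
      have hsq : ‖f t‖ ^ 2 = 1 + t ^ 2 := by
        rw [hfdef]
        show ‖w + t • v‖ ^ 2 = 1 + t ^ 2
        rw [norm_add_sq_real, hw, real_inner_smul_right, hwv, norm_smul, hnv,
          Real.norm_eq_abs, mul_one, mul_zero]
        rw [sq_abs]; ring
      have hfpos : 0 < ‖f t‖ := by nlinarith [norm_nonneg (f t)]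
      have h2 : ‖f t‖ ≤ Real.sqrt 2 := by
        apply Real.le_sqrt_of_sq_le
        nlinarith [ht.2, ht.1]
      apply ENNReal.ofReal_le_ofReal
      rw [h1]
      gcongr
      exact inv_nonneg.2 ht.1.le
    have calc1 : (⊤ : ℝ≥0∞) ≤ ∫⁻ t, ENNReal.ofReal (‖w - f t‖⁻¹ * ‖f t‖⁻¹) := by
      calc (⊤ : ℝ≥0∞)
          = (∫⁻ t in Ioo (0:ℝ) 1, ENNReal.ofReal t⁻¹) * ENNReal.ofReal (Real.sqrt 2)⁻¹ := by
            rw [lintegral_inv_Ioo_top, ENNReal.top_mul]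
            simp only [ne_eq, ENNReal.ofReal_eq_zero, not_le]
            positivity
        _ = ∫⁻ t in Ioo (0:ℝ) 1, ENNReal.ofReal t⁻¹ * ENNReal.ofReal (Real.sqrt 2)⁻¹ :=
            (lintegral_mul_const _ measurable_inv.ennreal_ofReal).symm
        _ = ∫⁻ t in Ioo (0:ℝ) 1, ENNReal.ofReal (t⁻¹ * (Real.sqrt 2)⁻¹) := by
            refine setLIntegral_congr_fun measurableSet_Ioo
              (fun t ht => ?_)
            rw [ENNReal.ofReal_mul (inv_nonneg.2 ht.1.le)]
        _ ≤ ∫⁻ t in Ioo (0:ℝ) 1, ENNReal.ofReal (‖w - f t‖⁻¹ * ‖f t‖⁻¹) :=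
            setLIntegral_mono hmeas hbound
        _ ≤ ∫⁻ t, ENNReal.ofReal (‖w - f t‖⁻¹ * ‖f t‖⁻¹) :=
            setLIntegral_le_lintegral _ _
    exact top_le_iff.1 calc1
  refine ⟨main, ?_⟩
  rintro ⟨C, hCtop, hC⟩
  set w : EuclideanSpace ℝ (Fin 2) := EuclideanSpace.single (0 : Fin 2) (1:ℝ) with hwdef
  have hw : ‖w‖ = 1 := by
    rw [hwdef, EuclideanSpace.norm_single]; norm_num
  have hw0 : w ≠ 0 := by
    intro h; rw [h] at hw; simp at hw
  have hL : LambdaTwo w = ⊤ := by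
    rw [LambdaTwo, main w hw, hw]
    rw [ENNReal.mul_top]
    simp only [ne_eq, ENNReal.ofReal_eq_zero, not_le]
    norm_num
  exact hCtop (top_le_iff.1 (hL ▸ hC w hw0))
end

section
/- For every α with 1/2 < α < 1 there is a constant C > 0 such that Λ_{2,α}(w) ≤ C for all w ∈ ℝ² \ {0}, where Λ_{2,α}(w) = ‖w‖^{2α} (2‖w‖)^{−1} ∫_{P(w)} ‖w−y‖^{−α} ‖y‖^{−α} dμ¹(y) and P(w) = {y ∈ ℝ² : 2⟪w,y⟫ = 1+‖w‖²}. -/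
open MeasureTheory Real Set

private lemma oneD_aux {α d e2 : ℝ} (hα1 : 1/2 < α) (hα2 : α < 1) (hd : 1 ≤ d) (he2 : 0 ≤ e2) :
    ∫ t : ℝ, Real.sqrt (e2 + t^2) ^ (-α) * Real.sqrt (d^2 + t^2) ^ (-α) ≤
      d ^ (1 - 2*α) * (2/(1-α) + 2/(2*α-1)) := by
  have hd0 : 0 < d := lt_of_lt_of_le one_pos hd
  set F : ℝ → ℝ := fun t => Real.sqrt (e2 + t^2) ^ (-α) * Real.sqrt (d^2 + t^2) ^ (-α)
    with hF
  have hFcont : ∀ s : Set ℝ, (∀ x ∈ s, 0 < x) → ContinuousOn F s := by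
    intro s hs
    apply ContinuousOn.mul
    · apply ContinuousOn.rpow_const
        ((continuous_const.add (continuous_pow 2)).sqrt.continuousOn)
      intro x hx
      exact Or.inl (ne_of_gt (Real.sqrt_pos.mpr (by show 0 < e2 + x^2; nlinarith [hs x hx])))
    · apply ContinuousOn.rpow_const
        ((continuous_const.add (continuous_pow 2)).sqrt.continuousOn)
      intro x hx
      have h1 : 0 < d ^ 2 + x ^ 2 := by nlinarith [hs x hx]
      exact Or.inl (ne_of_gt (Real.sqrt_pos.mpr h1))
  have hFnonneg : ∀ t, 0 ≤ F t := fun t =>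
    mul_nonneg (Real.rpow_nonneg (Real.sqrt_nonneg _) _)
      (Real.rpow_nonneg (Real.sqrt_nonneg _) _)
  -- even function reduction
  have habs : (fun t : ℝ => F |t|) = F := by
    funext t; simp only [hF, sq_abs]
  have h2 : ∫ t : ℝ, F t = 2 * ∫ t in Ioi (0:ℝ), F t := by
    rw [← integral_comp_abs (f := F), habs]
  -- pointwise bounds
  have hb1 : ∀ t ∈ Ioc (0:ℝ) d, F t ≤ d ^ (-α) * t ^ (-α) := by
    intro t ht
    have ht0 : 0 < t := ht.1
    have h1 : Real.sqrt (e2 + t^2) ^ (-α) ≤ t ^ (-α) := by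
      apply Real.rpow_le_rpow_of_nonpos ht0 _ (by linarith)
      calc t = Real.sqrt (t^2) := by rw [Real.sqrt_sq ht0.le]
      _ ≤ Real.sqrt (e2 + t^2) := Real.sqrt_le_sqrt (by linarith)
    have h2' : Real.sqrt (d^2 + t^2) ^ (-α) ≤ d ^ (-α) := by
      apply Real.rpow_le_rpow_of_nonpos hd0 _ (by linarith)
      calc d = Real.sqrt (d^2) := by rw [Real.sqrt_sq hd0.le]
      _ ≤ Real.sqrt (d^2 + t^2) := Real.sqrt_le_sqrt (by nlinarith)
    calc F t ≤ t ^ (-α) * d ^ (-α) :=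
          mul_le_mul h1 h2' (Real.rpow_nonneg (Real.sqrt_nonneg _) _)
            (Real.rpow_nonneg ht0.le _)
    _ = d ^ (-α) * t ^ (-α) := mul_comm _ _
  have hb2 : ∀ t ∈ Ioi d, F t ≤ t ^ (-(2*α)) := by
    intro t ht
    have ht0 : 0 < t := lt_trans hd0 ht
    have h1 : Real.sqrt (e2 + t^2) ^ (-α) ≤ t ^ (-α) := by
      apply Real.rpow_le_rpow_of_nonpos ht0 _ (by linarith)
      calc t = Real.sqrt (t^2) := by rw [Real.sqrt_sq ht0.le]
      _ ≤ Real.sqrt (e2 + t^2) := Real.sqrt_le_sqrt (by linarith)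
    have h2' : Real.sqrt (d^2 + t^2) ^ (-α) ≤ t ^ (-α) := by
      apply Real.rpow_le_rpow_of_nonpos ht0 _ (by linarith)
      calc t = Real.sqrt (t^2) := by rw [Real.sqrt_sq ht0.le]
      _ ≤ Real.sqrt (d^2 + t^2) := Real.sqrt_le_sqrt (by nlinarith)
    calc F t ≤ t ^ (-α) * t ^ (-α) :=
          mul_le_mul h1 h2' (Real.rpow_nonneg (Real.sqrt_nonneg _) _)
            (Real.rpow_nonneg ht0.le _)
    _ = t ^ (-(2*α)) := by rw [← Real.rpow_add ht0]; ring_nf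
  -- integrability of majorants
  have hig1 : IntegrableOn (fun t : ℝ => d ^ (-α) * t ^ (-α)) (Ioc 0 d) := by
    apply Integrable.const_mul
    have := intervalIntegral.intervalIntegrable_rpow' (a := 0) (b := d)
      (r := -α) (by linarith)
    rwa [intervalIntegrable_iff_integrableOn_Ioc_of_le hd0.le] at this
  have hig2 : IntegrableOn (fun t : ℝ => t ^ (-(2*α))) (Ioi d) :=
    integrableOn_Ioi_rpow_of_lt (by linarith) hd0
  -- integrability of F on pieces
  have hiF1 : IntegrableOn F (Ioc 0 d) := by
    apply Integrable.mono' hig1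
      ((hFcont _ (fun x hx => hx.1)).aestronglyMeasurable measurableSet_Ioc)
    filter_upwards [ae_restrict_mem measurableSet_Ioc] with t ht
    rw [Real.norm_eq_abs, abs_of_nonneg (hFnonneg t)]
    exact hb1 t ht
  have hiF2 : IntegrableOn F (Ioi d) := by
    apply Integrable.mono' hig2
      ((hFcont _ (fun x hx => lt_trans hd0 hx)).aestronglyMeasurable measurableSet_Ioi)
    filter_upwards [ae_restrict_mem measurableSet_Ioi] with t ht
    rw [Real.norm_eq_abs, abs_of_nonneg (hFnonneg t)]
    exact hb2 t ht
  -- split Ioi 0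
  have hsplit : ∫ t in Ioi (0:ℝ), F t =
      (∫ t in Ioc (0:ℝ) d, F t) + ∫ t in Ioi d, F t := by
    rw [← setIntegral_union (Ioc_disjoint_Ioi le_rfl) measurableSet_Ioi hiF1 hiF2,
      Ioc_union_Ioi_eq_Ioi hd0.le]
  -- bound the pieces
  have hp1 : ∫ t in Ioc (0:ℝ) d, F t ≤ d ^ (-α) * (d ^ (-α + 1) / (-α + 1)) := by
    have := setIntegral_mono_on hiF1 hig1 measurableSet_Ioc hb1
    refine le_trans this (le_of_eq ?_)
    rw [MeasureTheory.integral_const_mul]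
    congr 1
    rw [← intervalIntegral.integral_of_le hd0.le]
    rw [integral_rpow (Or.inl (by linarith))]
    rw [Real.zero_rpow (by linarith), sub_zero]
  have hp2 : ∫ t in Ioi d, F t ≤ -d ^ (-(2*α) + 1) / (-(2*α) + 1) := by
    have := setIntegral_mono_on hiF2 hig2 measurableSet_Ioi hb2
    refine le_trans this (le_of_eq ?_)
    exact integral_Ioi_rpow_of_lt (by linarith) hd0
  -- combine
  rw [h2, hsplit]
  have hh : d ^ (-α) * d ^ (-α + 1) = d ^ (1 - 2*α) := by
    rw [← Real.rpow_add hd0]; congr 1; ring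
  have key : d ^ (-α) * (d ^ (-α + 1) / (-α + 1)) = d ^ (1 - 2*α) / (1 - α) := by
    rw [← mul_div_assoc, hh, show (-α + 1 : ℝ) = 1 - α by ring]
  have key2 : -d ^ (-(2*α) + 1) / (-(2*α) + 1) = d ^ (1 - 2*α) / (2*α - 1) := by
    rw [show (-(2*α) + 1 : ℝ) = 1 - 2*α by ring,
      show (1 - 2*α : ℝ) = -(2*α - 1) from by ring] 
    rw [div_neg, neg_div, neg_neg, show (-(2*α - 1) : ℝ) = 1 - 2*α by ring]
  have := add_le_add hp1 hp2
  rw [key, key2] at this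
  calc 2 * ((∫ t in Ioc (0:ℝ) d, F t) + ∫ t in Ioi d, F t)
      ≤ 2 * (d ^ (1 - 2*α) / (1 - α) + d ^ (1 - 2*α) / (2*α - 1)) := by linarith
    _ = d ^ (1 - 2*α) * (2/(1-α) + 2/(2*α-1)) := by ring

set_option maxHeartbeats 1000000 in
/-- For `1/2 < α < 1` the two-dimensional integral `Λ_{2,α}` is uniformly
bounded on `ℝ² \ {0}`. -/
theorem Lambda_two_alpha_uniformly_bounded :
    ∀ α : ℝ, 1 / 2 < α → α < 1 → ∃ C : ℝ, 0 < C ∧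
      ∀ w : EuclideanSpace ℝ (Fin 2), w ≠ 0 →
        ‖w‖ ^ (2 * α) * (2 * ‖w‖)⁻¹ *
            ∫ y in {y : EuclideanSpace ℝ (Fin 2) |
                2 * (inner ℝ w y : ℝ) = 1 + ‖w‖ ^ 2},
              ‖w - y‖ ^ (-α) * ‖y‖ ^ (-α) ∂μH[(1 : ℝ)] ≤ C := by
  intro α hα1 hα2
  have hK1 : (0:ℝ) < 1 - α := by linarith
  have hK2 : (0:ℝ) < 2*α - 1 := by linarith
  refine ⟨2/(1-α) + 2/(2*α-1), by positivity, ?_⟩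
  intro w hw
  set r := ‖w‖ with hrdef
  have hr : 0 < r := norm_pos_iff.mpr hw
  have hr' : r ≠ 0 := ne_of_gt hr
  have hw2 : w 0 ^ 2 + w 1 ^ 2 = r ^ 2 := by
    have := EuclideanSpace.norm_eq w
    rw [Fin.sum_univ_two] at this
    rw [hrdef, this, Real.sq_sqrt (by positivity)]
    simp [Real.norm_eq_abs, sq_abs]
  -- the unit direction of the line
  set u : EuclideanSpace ℝ (Fin 2) :=
    (WithLp.equiv 2 (Fin 2 → ℝ)).symm ![-(r⁻¹ * w 1), r⁻¹ * w 0] with hu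
  have hu0 : u 0 = -(r⁻¹ * w 1) := by simp [hu]
  have hu1 : u 1 = r⁻¹ * w 0 := by simp [hu]
  have hwu : (inner ℝ w u : ℝ) = 0 := by
    simp only [PiLp.inner_apply, RCLike.inner_apply, Fin.sum_univ_two, hu0, hu1,
      conj_trivial]
    ring
  have hnu : ‖u‖ = 1 := by
    rw [EuclideanSpace.norm_eq, Fin.sum_univ_two, hu0, hu1]
    rw [show ‖-(r⁻¹ * w 1)‖ ^ 2 + ‖r⁻¹ * w 0‖ ^ 2 = r⁻¹^2 * (w 0 ^2 + w 1 ^2) by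
      simp [Real.norm_eq_abs, mul_pow, ← abs_inv, sq_abs]; ring]
    rw [hw2]
    rw [show r⁻¹ ^ 2 * r ^ 2 = 1 by field_simp]
    exact Real.sqrt_one
  -- the parametrization of the line
  set c : ℝ := (1 + r ^ 2) / (2 * r ^ 2) with hc
  have hcpos : 0 < c := by rw [hc]; positivity
  set y0 : EuclideanSpace ℝ (Fin 2) := c • w with hy0
  set φ : ℝ → EuclideanSpace ℝ (Fin 2) := fun t => y0 + t • u with hφ
  have hφap : ∀ t i, φ t i = c * w i + t * u i := by
    intro t i; simp [hφ, hy0]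
  have hinner : ∀ y : EuclideanSpace ℝ (Fin 2), (inner ℝ w y : ℝ) = w 0 * y 0 + w 1 * y 1 := by
    intro y; simp [PiLp.inner_apply, RCLike.inner_apply, Fin.sum_univ_two]; ring
  have hiso : Isometry φ := by
    apply Isometry.of_dist_eq
    intro a b
    simp only [hφ, dist_eq_norm, Real.dist_eq]
    rw [show (y0 + a • u) - (y0 + b • u) = (a - b) • u by rw [sub_smul]; abel]
    rw [norm_smul, hnu, mul_one, Real.norm_eq_abs]
  have hrange : range φ = {y : EuclideanSpace ℝ (Fin 2) |
      2 * (inner ℝ w y : ℝ) = 1 + ‖w‖ ^ 2} := by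
    ext y
    simp only [mem_range, mem_setOf_eq, ← hrdef]
    constructor
    · rintro ⟨t, rfl⟩
      rw [hinner, hφap, hφap, hu0, hu1, hc]
      linear_combination (norm := (field_simp; ring)) ((1 + r^2)/r^2) * hw2
    · intro hy
      rw [hinner] at hy
      refine ⟨u 0 * y 0 + u 1 * y 1, ?_⟩
      refine PiLp.ext (Fin.forall_fin_two.mpr ⟨?_, ?_⟩)
      · rw [hφap, hu0, hu1, hc]
        linear_combination (norm := (field_simp; ring))
          (-(w 0) / (2*r^2)) * hy + ((y 0) / r^2) * hw2
      · rw [hφap, hu0, hu1, hc]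
        linear_combination (norm := (field_simp; ring))
          (-(w 1) / (2*r^2)) * hy + ((y 1) / r^2) * hw2
  -- measurable embedding and measure transfer
  have hemb : MeasurableEmbedding φ := hiso.isClosedEmbedding.measurableEmbedding
  have hmap : Measure.map φ (volume : Measure ℝ) =
      (μH[(1:ℝ)] : Measure (EuclideanSpace ℝ (Fin 2))).restrict (range φ) := by
    refine Measure.ext fun A hA => ?_
    rw [hemb.map_apply, Measure.restrict_apply hA,
      ← Set.image_preimage_eq_inter_range (f := φ),
      hiso.hausdorffMeasure_image (Or.inl zero_le_one), ← hausdorffMeasure_real]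
  -- the norms along the line
  have hnφ : ∀ t : ℝ, ‖φ t‖ = Real.sqrt ((c * r) ^ 2 + t ^ 2) := by
    intro t
    have hsq : ‖φ t‖ ^ 2 = (c * r) ^ 2 + t ^ 2 := by
      rw [hφ]
      rw [norm_add_sq_real]
      rw [real_inner_smul_left, real_inner_smul_right, hwu]
      rw [norm_smul, norm_smul, hrdef]
      simp [Real.norm_eq_abs, abs_of_pos hcpos, mul_pow, sq_abs, hnu]
    rw [← hsq, Real.sqrt_sq (norm_nonneg _)]
  have hnwφ : ∀ t : ℝ, ‖w - φ t‖ = Real.sqrt (((1 - c) * r) ^ 2 + t ^ 2) := by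
    intro t
    have hd : w - φ t = (1 - c) • w - t • u := by
      rw [hφ]; rw [hy0, sub_smul, one_smul]; module
    have hsq : ‖w - φ t‖ ^ 2 = ((1 - c) * r) ^ 2 + t ^ 2 := by
      rw [hd, norm_sub_sq_real]
      rw [real_inner_smul_left, real_inner_smul_right, hwu]
      rw [norm_smul, norm_smul, hrdef]
      simp [Real.norm_eq_abs, mul_pow, sq_abs, hnu]
    rw [← hsq, Real.sqrt_sq (norm_nonneg _)]
  -- rewrite the integral as a one-dimensional integral
  have hint : (∫ y in {y : EuclideanSpace ℝ (Fin 2) |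
        2 * (inner ℝ w y : ℝ) = 1 + ‖w‖ ^ 2},
        ‖w - y‖ ^ (-α) * ‖y‖ ^ (-α) ∂μH[(1 : ℝ)]) =
      ∫ t : ℝ, Real.sqrt (((1 - c) * r) ^ 2 + t^2) ^ (-α) *
        Real.sqrt ((c * r)^2 + t^2) ^ (-α) := by
    rw [← hrange, ← hmap, hemb.integral_map]
    congr 1
    funext t
    rw [hnφ, hnwφ]
  rw [hint]
  -- apply the one-dimensional estimate
  have hd1 : 1 ≤ c * r := by
    rw [hc]
    rw [div_mul_eq_mul_div, le_div_iff₀ (by positivity)]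
    nlinarith [sq_nonneg (r - 1)]
  have hdpos : 0 < c * r := lt_of_lt_of_le one_pos hd1
  have hbound := oneD_aux hα1 hα2 hd1 (sq_nonneg ((1 - c) * r))
  set K : ℝ := 2/(1-α) + 2/(2*α-1) with hKdef
  have hK : 0 < K := by positivity
  set D : ℝ := (c * r) ^ (1 - 2*α) with hD
  have hInonneg : 0 ≤ r ^ (2*α) * (2*r)⁻¹ := by positivity
  calc r ^ (2 * α) * (2 * r)⁻¹ *
        ∫ t : ℝ, Real.sqrt (((1 - c) * r) ^ 2 + t^2) ^ (-α) *
          Real.sqrt ((c * r)^2 + t^2) ^ (-α)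
      ≤ r ^ (2 * α) * (2 * r)⁻¹ * (D * K) :=
        mul_le_mul_of_nonneg_left hbound hInonneg
    _ ≤ K := by
        -- prefactor rewriting
        have hpref : r ^ (2*α) * (2*r)⁻¹ = r ^ (2*α - 1) * 2⁻¹ := by
          rw [show (2*r : ℝ)⁻¹ = r ^ (-(1:ℝ)) * 2⁻¹ by
            rw [Real.rpow_neg_one]; rw [mul_inv]; ring]
          rw [← mul_assoc, ← Real.rpow_add hr,
            show (2*α + -1 : ℝ) = 2*α - 1 by ring]
        rw [hpref]
        -- bound r ^ (2α-1) by (2 c r)^(2α-1)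
        have hr2d : r ≤ 2 * (c * r) := by
          have h : 2 * (c * r) = (1 + r^2) / r := by rw [hc]; field_simp
          rw [h, le_div_iff₀ hr]
          nlinarith
        have h1 : r ^ (2*α - 1) ≤ 2 ^ (2*α - 1) * (c * r) ^ (2*α - 1) := by
          rw [← Real.mul_rpow (by norm_num) hdpos.le]
          exact Real.rpow_le_rpow hr.le hr2d (by linarith)
        have h2 : (c * r) ^ (2*α - 1) * D = 1 := by
          rw [hD, ← Real.rpow_add hdpos]
          norm_num
        have h3 : (2:ℝ) ^ (2*α - 1) ≤ 2 := by
          calc (2:ℝ) ^ (2*α - 1) ≤ 2 ^ (1:ℝ) :=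
            Real.rpow_le_rpow_of_exponent_le one_le_two (by linarith)
          _ = 2 := Real.rpow_one 2
        have hDnn : 0 ≤ D := by rw [hD]; positivity
        have h2nn : (0:ℝ) ≤ 2 ^ (2*α - 1) := by positivity
        calc r ^ (2*α - 1) * 2⁻¹ * (D * K)
            = (r ^ (2*α - 1) * D) * K * 2⁻¹ := by ring
          _ ≤ ((2 ^ (2*α - 1) * (c * r) ^ (2*α - 1)) * D) * K * 2⁻¹ := by
              apply mul_le_mul_of_nonneg_right _ (by norm_num)
              apply mul_le_mul_of_nonneg_right _ hK.le
              exact mul_le_mul_of_nonneg_right h1 hDnn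
          _ = 2 ^ (2*α - 1) * ((c * r) ^ (2*α - 1) * D) * K * 2⁻¹ := by ring
          _ = 2 ^ (2*α - 1) * K * 2⁻¹ := by rw [h2]; ring
          _ ≤ 2 * K * 2⁻¹ := by
              apply mul_le_mul_of_nonneg_right _ (by norm_num)
              exact mul_le_mul_of_nonneg_right h3 hK.le
          _ = K := by ring
end
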